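/- Let X : Ω → ℕ be the number of distinct n-grams occurring in a random corpus of N i.i.d. tokens, where the k-th most frequent n-gram has occurrence probability q_k ≤ p·k^{-δ} per position with δ > 1. Then E[X] ≤ C·N^{1/δ} for a constant C depending only on p and δ. -/

import Mathlib

lemma hl_key_rpow (s x : ℝ) (hs : 0 < s) (hx : 1 ≤ x) :
    s * (x+1) ^ (-(s+1)) ≤ x ^ (-s) - (x+1) ^ (-s) := by
  have hx0 : 0 < x := lt_of_lt_of_le one_pos hx
  have hy0 : 0 < x + 1 := by linarith
  -- log (y/x) ≥ 1/y
  have hlog : 1 / (x+1) ≤ Real.log ((x+1)/x) := by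
    have h := Real.log_le_sub_one_of_pos (show (0:ℝ) < x/(x+1) by positivity)
    have : Real.log (x/(x+1)) = - Real.log ((x+1)/x) := by
      rw [Real.log_div hx0.ne' hy0.ne', Real.log_div hy0.ne' hx0.ne']; ring
    rw [this] at h
    have hxy : x / (x+1) - 1 = - (1/(x+1)) := by field_simp; ring
    linarith [h, hxy ▸ h]
  -- (y/x)^s ≥ 1 + s/y
  have hexp : 1 + s / (x+1) ≤ ((x+1)/x) ^ s := by
    rw [Real.rpow_def_of_pos (by positivity)]
    have h1 : s * (1/(x+1)) ≤ s * Real.log ((x+1)/x) :=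
      mul_le_mul_of_nonneg_left hlog hs.le
    have h2 := Real.add_one_le_exp (s * Real.log ((x+1)/x))
    calc 1 + s / (x+1) = s * (1/(x+1)) + 1 := by ring
      _ ≤ s * Real.log ((x+1)/x) + 1 := by linarith
      _ ≤ Real.exp (s * Real.log ((x+1)/x)) := h2
      _ = Real.exp (Real.log ((x+1)/x) * s) := by ring_nf
  -- x^(-s) = (x+1)^(-s) * ((x+1)/x)^s
  have hfact : x ^ (-s) = (x+1) ^ (-s) * ((x+1)/x) ^ s := by
    rw [Real.div_rpow hy0.le hx0.le, Real.rpow_neg hx0.le, Real.rpow_neg hy0.le]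
    field_simp
  have hys : 0 < (x+1) ^ (-s) := Real.rpow_pos_of_pos hy0 _
  have hsplit : (x+1) ^ (-(s+1)) = (x+1) ^ (-s) / (x+1) := by
    rw [show -(s+1) = -s + (-1) by ring, Real.rpow_add hy0, Real.rpow_neg_one, div_eq_mul_inv]
  rw [hfact, hsplit]
  have := mul_le_mul_of_nonneg_left hexp hys.le
  calc s * ((x+1)^(-s) / (x+1)) = (x+1)^(-s) * (1 + s/(x+1)) - (x+1)^(-s) := by ring
    _ ≤ (x+1)^(-s) * ((x+1)/x)^s - (x+1)^(-s) := by linarith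

lemma hl_summable_base (δ : ℝ) (hδ : 1 < δ) : Summable (fun k : ℕ => ((k:ℝ)+1)^(-δ)) := by
  have h1 : Summable (fun n : ℕ => (n:ℝ) ^ (-δ)) := Real.summable_nat_rpow.2 (by linarith)
  have h2 := (summable_nat_add_iff 1).2 h1
  convert h2 using 2 with k
  case e'_5 => push_cast; ring_nf
  case e'_3 => rfl

lemma hl_tail_bound (δ : ℝ) (hδ : 1 < δ) (K : ℕ) (hK : 1 ≤ K) :
    ∑' k : ℕ, (((k+K : ℕ):ℝ)+1)^(-δ) ≤ (K:ℝ)^(1-δ) / (δ-1) := by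
  have hs : (0:ℝ) < δ - 1 := by linarith
  have hsum : Summable (fun k : ℕ => (((k+K : ℕ):ℝ)+1)^(-δ)) :=
    (summable_nat_add_iff K).2 (hl_summable_base δ hδ)
  apply Summable.tsum_le_of_sum_range_le hsum
  intro n
  set h : ℕ → ℝ := fun m => ((m+K : ℕ):ℝ)^(1-δ) with hh
  have hterm : ∀ k : ℕ, (((k+K : ℕ):ℝ)+1)^(-δ) ≤ (h k - h (k+1)) / (δ-1) := by
    intro k
    have hx : (1:ℝ) ≤ ((k+K:ℕ):ℝ) := by
      have : 1 ≤ k + K := le_add_of_nonneg_of_le (Nat.zero_le k) hK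
      exact_mod_cast this
    have := hl_key_rpow (δ-1) ((k+K:ℕ):ℝ) hs hx
    rw [le_div_iff₀ hs]
    have e1 : -(δ-1+1) = -δ := by ring
    have e2 : -(δ-1) = 1-δ := by ring
    rw [e1, e2] at this
    have e3 : h (k+1) = (((k+K:ℕ):ℝ)+1)^(1-δ) := by
      simp only [hh]; norm_num; push_cast; ring_nf
    have e4 : h k = ((k+K:ℕ):ℝ)^(1-δ) := rfl
    rw [e3, e4]
    linarith
  calc ∑ k ∈ Finset.range n, (((k+K : ℕ):ℝ)+1)^(-δ)
      ≤ ∑ k ∈ Finset.range n, (h k - h (k+1)) / (δ-1) :=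
        Finset.sum_le_sum (fun k _ => hterm k)
    _ = (∑ k ∈ Finset.range n, (h k - h (k+1))) / (δ-1) := by rw [Finset.sum_div]
    _ = (h 0 - h n) / (δ-1) := by rw [Finset.sum_range_sub' h n]
    _ ≤ h 0 / (δ-1) := by
        have : 0 ≤ h n := Real.rpow_nonneg (by positivity) _
        gcongr
        linarith
    _ = (K:ℝ)^(1-δ) / (δ-1) := by simp [hh]

/-- Generalized Heaps' law: if the `k`-th most frequent n-gram has occurrence probability
`q_k ≤ p·k^(-δ)` per position (with `0 ≤ q_k ≤ 1` and `δ > 1`), then the expected number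
of distinct n-grams occurring among `N` i.i.d. positions,
`E[X] = Σ_k (1 - (1 - q_k)^N)`, is at most `C·N^(1/δ)` for a constant `C` depending
only on `p` and `δ`. -/
theorem expected_distinct_ngrams_le (δ p : ℝ) (hδ : 1 < δ) (hp : 0 < p) :
    ∃ C : ℝ, ∀ (N : ℕ), 0 < N → ∀ (q : ℕ → ℝ),
      (∀ k, 0 ≤ q k) → (∀ k, q k ≤ 1) →
      (∀ k, q k ≤ p * ((k : ℝ) + 1) ^ (-δ)) →
      ∑' k : ℕ, (1 - (1 - q k) ^ N) ≤ C * (N : ℝ) ^ (1 / δ) := by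
  refine ⟨2 + p/(δ-1), fun N hN q hq0 hq1 hqb => ?_⟩
  have hδ0 : (0:ℝ) < δ := by linarith
  have hs : (0:ℝ) < δ - 1 := by linarith
  set f : ℕ → ℝ := fun k => 1 - (1 - q k) ^ N with hf
  set g : ℕ → ℝ := fun k => ((k:ℝ)+1)^(-δ) with hg
  have hg0 : ∀ k, 0 ≤ g k := fun k => Real.rpow_nonneg (by positivity) _
  have hf0 : ∀ k, 0 ≤ f k := by
    intro k
    have : (1 - q k) ^ N ≤ 1 :=
      pow_le_one₀ (by linarith [hq0 k, hq1 k]) (by linarith [hq0 k])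
    simp only [hf]; linarith
  have hf1 : ∀ k, f k ≤ 1 := by
    intro k
    have : 0 ≤ (1 - q k) ^ N := pow_nonneg (by linarith [hq1 k]) N
    simp only [hf]; linarith
  have hfN : ∀ k, f k ≤ ((N:ℝ) * p) * g k := by
    intro k
    have hb : 1 + (N:ℝ) * (-(q k)) ≤ (1 + -(q k)) ^ N :=
      one_add_mul_le_pow (by linarith [hq1 k]) N
    have h1 : f k ≤ (N:ℝ) * q k := by
      simp only [hf]
      have : (1 - q k) ^ N = (1 + -(q k)) ^ N := by ring_nf
      rw [this]; linarith
    calc f k ≤ (N:ℝ) * q k := h1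
      _ ≤ (N:ℝ) * (p * g k) := mul_le_mul_of_nonneg_left (hqb k) (Nat.cast_nonneg N)
      _ = ((N:ℝ) * p) * g k := by ring
  have hbase : Summable g := hl_summable_base δ hδ
  have hfsum : Summable f := Summable.of_nonneg_of_le hf0 hfN (hbase.mul_left _)
  -- split at K
  set K : ℕ := ⌈(N:ℝ)^(1/δ)⌉₊ with hKdef
  have hN1 : (1:ℝ) ≤ (N:ℝ) := by exact_mod_cast hN
  have hr1 : (1:ℝ) ≤ (N:ℝ)^(1/δ) := by
    calc (1:ℝ) = (1:ℝ)^(1/δ) := (Real.one_rpow _).symm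
    _ ≤ (N:ℝ)^(1/δ) := Real.rpow_le_rpow zero_le_one hN1 (by positivity)
  have hr0 : (0:ℝ) < (N:ℝ)^(1/δ) := by linarith
  have hK1 : 1 ≤ K := Nat.one_le_ceil_iff.2 hr0
  have hKge : (N:ℝ)^(1/δ) ≤ (K:ℝ) := Nat.le_ceil _
  have hKle : (K:ℝ) ≤ 2 * (N:ℝ)^(1/δ) := by
    have h := Nat.ceil_lt_add_one hr0.le
    rw [← hKdef] at h
    linarith
  rw [← Summable.sum_add_tsum_nat_add K hfsum]
  have hhead : ∑ i ∈ Finset.range K, f i ≤ 2 * (N:ℝ)^(1/δ) := by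
    calc ∑ i ∈ Finset.range K, f i ≤ ∑ i ∈ Finset.range K, 1 :=
          Finset.sum_le_sum (fun i _ => hf1 i)
      _ = (K:ℝ) := by simp
      _ ≤ 2 * (N:ℝ)^(1/δ) := hKle
  have htail : ∑' i : ℕ, f (i + K) ≤ (p/(δ-1)) * (N:ℝ)^(1/δ) := by
    have hgK : Summable (fun i : ℕ => g (i + K)) := (summable_nat_add_iff K).2 hbase
    have h1 : ∑' i : ℕ, f (i + K) ≤ ∑' i : ℕ, ((N:ℝ) * p) * g (i + K) :=
      Summable.tsum_le_tsum (fun i => hfN (i + K)) ((summable_nat_add_iff K).2 hfsum)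
        (hgK.mul_left _)
    have h2 : ∑' i : ℕ, ((N:ℝ) * p) * g (i + K) = ((N:ℝ) * p) * ∑' i : ℕ, g (i + K) :=
      tsum_mul_left
    have h3 : ∑' i : ℕ, g (i + K) ≤ (K:ℝ)^(1-δ) / (δ-1) := hl_tail_bound δ hδ K hK1
    have hKpos : (0:ℝ) < (K:ℝ) := by positivity
    have h4 : (N:ℝ) * (K:ℝ)^(1-δ) ≤ (N:ℝ)^(1/δ) := by
      have h5 : (K:ℝ)^(1-δ) ≤ ((N:ℝ)^(1/δ))^(1-δ) :=
        Real.rpow_le_rpow_of_nonpos hr0 hKge (by linarith)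
      have hN0 : (0:ℝ) < (N:ℝ) := by linarith
      have h6 : ((N:ℝ)^(1/δ))^(1-δ) = (N:ℝ)^(1/δ) / (N:ℝ) := by
        rw [← Real.rpow_mul (Nat.cast_nonneg N),
          show (1/δ)*(1-δ) = 1/δ - 1 by field_simp,
          Real.rpow_sub hN0, Real.rpow_one]
      rw [h6] at h5
      calc (N:ℝ) * (K:ℝ)^(1-δ) ≤ (N:ℝ) * ((N:ℝ)^(1/δ) / (N:ℝ)) :=
          mul_le_mul_of_nonneg_left h5 hN0.le
        _ = (N:ℝ)^(1/δ) := by field_simp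
    have htpos : 0 ≤ ∑' i : ℕ, g (i + K) := tsum_nonneg (fun i => hg0 _)
    calc ∑' i : ℕ, f (i + K) ≤ ((N:ℝ) * p) * ∑' i : ℕ, g (i + K) := h2 ▸ h1
      _ ≤ ((N:ℝ) * p) * ((K:ℝ)^(1-δ) / (δ-1)) :=
          mul_le_mul_of_nonneg_left h3 (by positivity)
      _ = (p/(δ-1)) * ((N:ℝ) * (K:ℝ)^(1-δ)) := by ring
      _ ≤ (p/(δ-1)) * (N:ℝ)^(1/δ) := mul_le_mul_of_nonneg_left h4 (by positivity)
  linarith
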